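/- The set {(1,1,1), (0,1,0), (0,0,1)} is a mixed metric generator of the hypercube Q_3; consequently mdim(Q_3) ≤ 3. -/

import Mathlib

/-- Distance from a vertex `s` to an edge `e` (as an element of `Sym2 V`):
the minimum of the distances from `s` to the two endpoints of `e`. -/
noncomputable def edgeDist {V : Type*} (G : SimpleGraph V) (e : Sym2 V) (s : V) : ℕ :=
  Sym2.lift ⟨fun x y => min (G.dist x s) (G.dist y s), fun _ _ => min_comm _ _⟩ e

/-- `S` is a metric generator for `G`: every pair of distinct vertices is
distinguished by some element of `S`. -/
def IsMetricGen {V : Type*} (G : SimpleGraph V) (S : Set V) : Prop :=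
  ∀ u v : V, u ≠ v → ∃ s ∈ S, G.dist s u ≠ G.dist s v

/-- `S` is an edge metric generator for `G`: every pair of distinct edges is
distinguished by some element of `S`. -/
def IsEdgeMetricGen {V : Type*} (G : SimpleGraph V) (S : Set V) : Prop :=
  ∀ e₁ ∈ G.edgeSet, ∀ e₂ ∈ G.edgeSet, e₁ ≠ e₂ → ∃ s ∈ S, edgeDist G e₁ s ≠ edgeDist G e₂ s

/-- Distance from a vertex `s` to a mixed element (a vertex or an edge). -/
noncomputable def mixedDist {V : Type*} (G : SimpleGraph V) (a : V ⊕ Sym2 V) (s : V) : ℕ :=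
  Sum.elim (fun w => G.dist s w) (fun e => edgeDist G e s) a

/-- A mixed element is valid if it is a vertex, or an actual edge of `G`. -/
def IsMixedElem {V : Type*} (G : SimpleGraph V) (a : V ⊕ Sym2 V) : Prop :=
  Sum.elim (fun _ => True) (fun e => e ∈ G.edgeSet) a

/-- `S` is a mixed metric generator for `G`: every pair of distinct elements of
`V(G) ∪ E(G)` is distinguished by some element of `S`. -/
def IsMixedMetricGen {V : Type*} (G : SimpleGraph V) (S : Set V) : Prop :=
  ∀ a b : V ⊕ Sym2 V, IsMixedElem G a → IsMixedElem G b → a ≠ b →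
    ∃ s ∈ S, mixedDist G a s ≠ mixedDist G b s

/-- The metric dimension: minimum cardinality of a metric generator. -/
noncomputable def metricDim {V : Type*} [Fintype V] (G : SimpleGraph V) : ℕ :=
  sInf {n | ∃ S : Finset V, S.card = n ∧ IsMetricGen G ↑S}

/-- The edge metric dimension: minimum cardinality of an edge metric generator. -/
noncomputable def edgeMetricDim {V : Type*} [Fintype V] (G : SimpleGraph V) : ℕ :=
  sInf {n | ∃ S : Finset V, S.card = n ∧ IsEdgeMetricGen G ↑S}

/-- The mixed metric dimension: minimum cardinality of a mixed metric generator. -/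
noncomputable def mixedMetricDim {V : Type*} [Fintype V] (G : SimpleGraph V) : ℕ :=
  sInf {n | ∃ S : Finset V, S.card = n ∧ IsMixedMetricGen G ↑S}

/-- The hypercube `Q_d`: vertices are binary vectors of length `d`, with two
vertices adjacent iff they differ in exactly one coordinate. -/
def cube (d : ℕ) : SimpleGraph (Fin d → Bool) where
  Adj u v := hammingDist u v = 1
  symm := ⟨fun u v h => by simp only [hammingDist_comm] at h ⊢; exact h⟩
  loopless := ⟨fun u h => by simp only [hammingDist_self] at h; exact one_ne_zero h.symm⟩


lemma hamming_le_walk {d : ℕ} {u v : Fin d → Bool} (p : (cube d).Walk u v) :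
    hammingDist u v ≤ p.length := by
  induction p with
  | nil => simp
  | cons h p ih =>
    calc hammingDist _ _ ≤ hammingDist _ _ + hammingDist _ _ := hammingDist_triangle _ _ _
    _ ≤ 1 + p.length := by rw [h]; omega
    _ = (SimpleGraph.Walk.cons h p).length := by simp [SimpleGraph.Walk.length_cons]; omega

lemma exists_walk_hamming {d : ℕ} : ∀ (n : ℕ) (u v : Fin d → Bool), hammingDist u v = n →
    ∃ p : (cube d).Walk u v, p.length = n := by
  intro n
  induction n with
  | zero => intro u v h; rw [hammingDist_eq_zero] at h; subst h; exact ⟨.nil, rfl⟩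
  | succ n ih =>
    intro u v h
    have hne : u ≠ v := by intro e; subst e; simp [hammingDist_self] at h
    obtain ⟨i, hi⟩ := Function.ne_iff.mp hne
    set u' := Function.update u i (v i) with hu'
    have hadj : (cube d).Adj u u' := by
      show hammingDist u u' = 1
      unfold hammingDist
      rw [Finset.card_eq_one]
      refine ⟨i, ?_⟩
      ext j
      by_cases hj : j = i <;> simp [hu', Function.update_apply, hj, hi]
    have hstep : hammingDist u' v = n := by
      have : Finset.univ.filter (fun j => u' j ≠ v j)
          = (Finset.univ.filter (fun j => u j ≠ v j)).erase i := by
        ext j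
        by_cases hj : j = i <;> simp [hu', Function.update_apply, hj]
      have hmem : i ∈ Finset.univ.filter (fun j => u j ≠ v j) := by simp [hi]
      have := congrArg Finset.card this
      rw [Finset.card_erase_of_mem hmem] at this
      unfold hammingDist at h ⊢
      omega
    obtain ⟨p, hp⟩ := ih u' v hstep
    exact ⟨.cons hadj p, by simp [hp]⟩

lemma cube_dist {d : ℕ} (u v : Fin d → Bool) : (cube d).dist u v = hammingDist u v := by
  obtain ⟨p, hp⟩ := exists_walk_hamming (hammingDist u v) u v rfl
  have h1 : (cube d).dist u v ≤ hammingDist u v := hp ▸ SimpleGraph.dist_le p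
  have hr : (cube d).Reachable u v := ⟨p⟩
  obtain ⟨q, hq⟩ := hr.exists_walk_length_eq_dist
  have h2 := hamming_le_walk q
  omega

instance {d : ℕ} : DecidableRel (cube d).Adj :=
  fun u v => inferInstanceAs (Decidable (hammingDist u v = 1))

lemma edgeDist_cube {d : ℕ} (e : Sym2 (Fin d → Bool)) (s : Fin d → Bool) :
    edgeDist (cube d) e s =
      Sym2.lift ⟨fun x y => min (hammingDist x s) (hammingDist y s),
        fun _ _ => min_comm _ _⟩ e := by
  induction e using Sym2.inductionOn with
  | hf x y => simp [edgeDist, cube_dist]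

set_option maxRecDepth 20000 in
set_option maxHeartbeats 2000000 in
set_option synthInstance.maxSize 2000 in
set_option synthInstance.maxHeartbeats 2000000 in
lemma gen13 : IsMixedMetricGen (cube 3)
      ({![true, true, true], ![false, true, false], ![false, false, true]} :
        Set (Fin 3 → Bool)) := by
  simp only [IsMixedMetricGen, mixedDist, IsMixedElem, edgeDist_cube, cube_dist,
    Set.mem_insert_iff, Set.mem_singleton_iff, Sum.forall, Sum.elim_inl, Sum.elim_inr]
  decide

/-- `{(1,1,1), (0,1,0), (0,0,1)}` is a mixed metric generator of
`Q_3`; consequently `mdim(Q_3) ≤ 3`. -/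
theorem stmt13 :
    IsMixedMetricGen (cube 3)
      ({![true, true, true], ![false, true, false], ![false, false, true]} :
        Set (Fin 3 → Bool)) ∧
    mixedMetricDim (cube 3) ≤ 3 := by
  refine ⟨gen13, ?_⟩
  apply Nat.sInf_le
  refine ⟨({![true, true, true], ![false, true, false], ![false, false, true]} :
    Finset (Fin 3 → Bool)), by decide, ?_⟩
  have hco : (↑({![true, true, true], ![false, true, false], ![false, false, true]} :
      Finset (Fin 3 → Bool)) : Set (Fin 3 → Bool)) =
      ({![true, true, true], ![false, true, false], ![false, false, true]} :
        Set (Fin 3 → Bool)) := by simp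
  rw [hco]
  exact gen13
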